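/- arXiv:1803.00683 — 6 statements merged into one kernel-verified Lean document; each statement's English description precedes it below -/
import Mathlib

section
/- Let A ≥ 0, B ≥ 0, K > 0 and P > 0 be real numbers, and define η(p) = (A + B·p)/log₂(1 + K·p). Then η is quasiconvex on the interval (0, P], i.e., for every real a the set {p ∈ (0, P] : η(p) ≤ a} is convex. -/
/-- Quasiconvexity of the transmit-power objective η(p) = (A + B·p)/log₂(1 + K·p)
on the interval (0, P]: every sublevel set is convex. -/
theorem eta_quasiconvex (A B K P : ℝ) (hA : 0 ≤ A) (hB : 0 ≤ B) (hK : 0 < K) (hP : 0 < P) :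
    ∀ a : ℝ, Convex ℝ {p : ℝ | p ∈ Set.Ioc (0 : ℝ) P ∧
      (A + B * p) / Real.logb 2 (1 + K * p) ≤ a} := by
  intro a
  have hLpos : ∀ p : ℝ, p ∈ Set.Ioc (0:ℝ) P → 0 < Real.logb 2 (1 + K * p) := by
    intro p hp
    have h1 : (1:ℝ) < 1 + K * p := by nlinarith [hp.1]
    exact Real.logb_pos (by norm_num) h1
  rcases lt_or_ge a 0 with ha | ha
  · -- empty set
    convert convex_empty (𝕜 := ℝ) (E := ℝ)
    ext p
    simp only [Set.mem_setOf_eq, Set.mem_empty_iff_false, iff_false]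
    rintro ⟨hp, hle⟩
    have hL := hLpos p hp
    have hnum : 0 ≤ A + B * p := by nlinarith [hp.1]
    have : 0 ≤ (A + B * p) / Real.logb 2 (1 + K * p) := div_nonneg hnum hL.le
    linarith
  · -- sublevel set of convex function
    have hlog : ConcaveOn ℝ (Set.Ioc (0:ℝ) P) (fun p => Real.log (1 + K * p)) := by
      refine ⟨convex_Ioc 0 P, ?_⟩
      intro x hx y hy t s ht hs hts
      have hc := strictConcaveOn_log_Ioi.concaveOn
      have hx' : (1 + K * x) ∈ Set.Ioi (0:ℝ) := by simp; nlinarith [hx.1]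
      have hy' : (1 + K * y) ∈ Set.Ioi (0:ℝ) := by simp; nlinarith [hy.1]
      have := hc.2 hx' hy' ht hs hts
      simp only [smul_eq_mul] at this ⊢
      have heq : t * (1 + K * x) + s * (1 + K * y) = 1 + K * (t * x + s * y) := by ring_nf; linarith [hts]
      rw [heq] at this
      exact this
    have hconc : ConcaveOn ℝ (Set.Ioc (0:ℝ) P)
        (fun p => a * Real.logb 2 (1 + K * p)) := by
      have hsc := hlog.smul (c := a / Real.log 2) (div_nonneg ha (Real.log_nonneg (by norm_num)))
      convert hsc using 2 with p
      rfl
      rfl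
      simp only [smul_eq_mul, Real.logb]
      ring
    have haff : ConvexOn ℝ (Set.Ioc (0:ℝ) P) (fun p => A + B * p) := by
      refine ⟨convex_Ioc 0 P, ?_⟩
      intro x hx y hy t s ht hs hts
      simp only [smul_eq_mul]
      nlinarith [hts]
    have hconv : ConvexOn ℝ (Set.Ioc (0:ℝ) P)
        (fun p => (A + B * p) - a * Real.logb 2 (1 + K * p)) := haff.sub hconc
    have := hconv.convex_le 0
    convert this using 1
    ext p
    simp only [Set.mem_setOf_eq, Set.sep_setOf]
    constructor
    · rintro ⟨hp, hle⟩
      refine ⟨hp, ?_⟩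
      have hL := hLpos p hp
      have := (div_le_iff₀ hL).mp hle
      linarith
    · rintro ⟨hp, hle⟩
      refine ⟨hp, ?_⟩
      have hL := hLpos p hp
      rw [div_le_iff₀ hL]
      linarith
end

section
/- Let A > 0, B ≥ 0 and K > 0, and define φ(p) = B·log₂(1 + K·p) − (K/ln 2)·(A + B·p)/(1 + K·p). Then φ(0) = −K·A/ln 2 < 0 and φ is strictly increasing on [0, ∞). -/
lemma phi_hasDerivAt (A B K : ℝ) (p : ℝ) (hp : 0 < 1 + K * p) :
    HasDerivAt (fun p : ℝ => B * Real.logb 2 (1 + K * p) -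
        K / Real.log 2 * ((A + B * p) / (1 + K * p)))
      (K ^ 2 * (A + B * p) / (Real.log 2 * (1 + K * p) ^ 2)) p := by
  have hne : (1 + K * p) ≠ 0 := ne_of_gt hp
  have hinner : HasDerivAt (fun p : ℝ => 1 + K * p) K p := by
    simpa using ((hasDerivAt_id p).const_mul K).const_add 1
  have hlog : HasDerivAt (fun p : ℝ => Real.log (1 + K * p)) (K / (1 + K * p)) p :=
    hinner.log hne
  have hnum : HasDerivAt (fun p : ℝ => A + B * p) B p := by
    simpa using ((hasDerivAt_id p).const_mul B).const_add A
  have hdiv : HasDerivAt (fun p : ℝ => (A + B * p) / (1 + K * p))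
      ((B * (1 + K * p) - (A + B * p) * K) / (1 + K * p) ^ 2) p := hnum.div hinner hne
  have h2 : Real.log 2 ≠ 0 := ne_of_gt (Real.log_pos one_lt_two)
  have := ((hlog.const_mul B).div_const (Real.log 2)).sub (hdiv.const_mul (K / Real.log 2))
  have heq : (fun p : ℝ => B * Real.log (1 + K * p) / Real.log 2 -
      K / Real.log 2 * ((A + B * p) / (1 + K * p))) =
      (fun p : ℝ => B * Real.logb 2 (1 + K * p) -
      K / Real.log 2 * ((A + B * p) / (1 + K * p))) := by
    funext x
    rw [Real.logb]
    ring
  rw [show ((fun x => B * Real.log (1 + K * x) / Real.log 2) - fun y => K / Real.log 2 * ((A + B * y) / (1 + K * y))) = _ from heq] at this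
  refine this.congr_deriv ?_
  field_simp
  ring

/-- For A > 0, B ≥ 0, K > 0, φ(p) = B·log₂(1 + K·p) − (K/ln 2)·(A + B·p)/(1 + K·p)
satisfies φ(0) = −K·A/ln 2 < 0 and φ is strictly increasing on [0, ∞). -/
theorem phi_neg_at_zero_and_strictMono (A B K : ℝ) (hA : 0 < A) (hB : 0 ≤ B) (hK : 0 < K) :
    (fun p : ℝ => B * Real.logb 2 (1 + K * p) -
        K / Real.log 2 * ((A + B * p) / (1 + K * p))) 0 = -(K * A) / Real.log 2 ∧
    (fun p : ℝ => B * Real.logb 2 (1 + K * p) -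
        K / Real.log 2 * ((A + B * p) / (1 + K * p))) 0 < 0 ∧
    StrictMonoOn (fun p : ℝ => B * Real.logb 2 (1 + K * p) -
        K / Real.log 2 * ((A + B * p) / (1 + K * p))) (Set.Ici (0 : ℝ)) := by
  have hlog2 : 0 < Real.log 2 := Real.log_pos one_lt_two
  have h0 : (fun p : ℝ => B * Real.logb 2 (1 + K * p) -
      K / Real.log 2 * ((A + B * p) / (1 + K * p))) 0 = -(K * A) / Real.log 2 := by
    simp [Real.logb]
    field_simp
  refine ⟨h0, ?_, ?_⟩
  · rw [h0]
    exact div_neg_of_neg_of_pos (by nlinarith) hlog2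
  · have hpos : ∀ p : ℝ, 0 ≤ p → 0 < 1 + K * p := by
      intro p hp; nlinarith
    apply strictMonoOn_of_deriv_pos (convex_Ici 0)
    · intro p hp
      exact (phi_hasDerivAt A B K p (hpos p hp)).continuousAt.continuousWithinAt
    · intro p hp
      rw [interior_Ici] at hp
      have hp0 : 0 ≤ p := le_of_lt hp
      rw [(phi_hasDerivAt A B K p (hpos p hp0)).deriv]
      have h1 : 0 < A + B * p := by nlinarith [mul_nonneg hB hp0]
      apply div_pos
      · positivity
      · positivity
end

section
/- Let A > 0, B ≥ 0, K > 0 and P > 0, and define η(p) = (A + B·p)/log₂(1 + K·p) and φ(p) = B·log₂(1 + K·p) − (K/ln 2)·(A + B·p)/(1 + K·p). If φ(P) ≤ 0, then η is strictly decreasing on (0, P]; in particular, η attains its minimum over (0, P] at p = P. -/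
/-- If φ(P) ≤ 0 then η(p) = (A + B·p)/log₂(1 + K·p) is strictly decreasing on (0, P],
so its minimum over (0, P] is attained at p = P. -/
theorem eta_strictAnti_of_phi_nonpos (A B K P : ℝ)
    (hA : 0 < A) (hB : 0 ≤ B) (hK : 0 < K) (hP : 0 < P)
    (hφ : B * Real.logb 2 (1 + K * P) -
        K / Real.log 2 * ((A + B * P) / (1 + K * P)) ≤ 0) :
    StrictAntiOn (fun p : ℝ => (A + B * p) / Real.logb 2 (1 + K * p)) (Set.Ioc 0 P) ∧
    ∀ p ∈ Set.Ioc (0 : ℝ) P,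
      (A + B * P) / Real.logb 2 (1 + K * P) ≤ (A + B * p) / Real.logb 2 (1 + K * p) := by
  have h2 : (0:ℝ) < Real.log 2 := Real.log_pos one_lt_two
  have hpos : ∀ {p : ℝ}, 0 ≤ p → (0:ℝ) < 1 + K * p := by
    intro p hp; nlinarith
  -- derivative of logb part
  have hlin : ∀ p : ℝ, HasDerivAt (fun x : ℝ => 1 + K * x) K p := by
    intro p
    simpa using ((hasDerivAt_id p).const_mul K).const_add 1
  have hL : ∀ p : ℝ, 0 ≤ p →
      HasDerivAt (fun x => Real.logb 2 (1 + K * x)) (K / ((1 + K * p) * Real.log 2)) p := by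
    intro p hp
    have h' := ((hlin p).log (ne_of_gt (hpos hp))).div_const (Real.log 2)
    simp only [Real.logb]
    refine h'.congr_deriv ?_
    field_simp
  have hnum : ∀ p : ℝ, HasDerivAt (fun x : ℝ => A + B * x) B p := by
    intro p
    simpa using ((hasDerivAt_id p).const_mul B).const_add A
  have hQ : ∀ p : ℝ, 0 ≤ p →
      HasDerivAt (fun x => (A + B * x) / (1 + K * x))
        ((B * (1 + K * p) - (A + B * p) * K) / (1 + K * p) ^ 2) p := by
    intro p hp
    exact (hnum p).div (hlin p) (ne_of_gt (hpos hp))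
  set φ : ℝ → ℝ := fun p =>
    B * Real.logb 2 (1 + K * p) - K / Real.log 2 * ((A + B * p) / (1 + K * p)) with hφdef
  have hφd : ∀ p : ℝ, 0 ≤ p →
      HasDerivAt φ (K ^ 2 * (A + B * p) / (Real.log 2 * (1 + K * p) ^ 2)) p := by
    intro p hp
    have h' := ((hL p hp).const_mul B).sub ((hQ p hp).const_mul (K / Real.log 2))
    refine h'.congr_deriv ?_
    have h1 := hpos hp
    field_simp
    ring
  have hφmono : StrictMonoOn φ (Set.Icc 0 P) := by
    apply strictMonoOn_of_deriv_pos (convex_Icc 0 P)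
    · intro p hp
      exact (hφd p hp.1).continuousAt.continuousWithinAt
    · intro p hp
      rw [interior_Icc] at hp
      rw [(hφd p hp.1.le).deriv]
      have h1 := hpos hp.1.le
      have h3 : 0 < A + B * p := by nlinarith [hp.1]
      exact div_pos (mul_pos (pow_pos hK 2) h3) (mul_pos h2 (pow_pos h1 2))
  have hφneg : ∀ p ∈ Set.Ioo (0:ℝ) P, φ p < 0 := by
    intro p hp
    exact lt_of_lt_of_le
      (hφmono ⟨hp.1.le, hp.2.le⟩ ⟨hP.le, le_refl P⟩ hp.2) hφ
  have hLpos : ∀ {p : ℝ}, 0 < p → 0 < Real.logb 2 (1 + K * p) := by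
    intro p hp
    exact Real.logb_pos one_lt_two (by nlinarith)
  have hfd : ∀ p : ℝ, 0 < p →
      HasDerivAt (fun x => (A + B * x) / Real.logb 2 (1 + K * x))
        ((B * Real.logb 2 (1 + K * p) - (A + B * p) * (K / ((1 + K * p) * Real.log 2))) /
          (Real.logb 2 (1 + K * p)) ^ 2) p := by
    intro p hp
    exact (hnum p).div (hL p hp.le) (ne_of_gt (hLpos hp))
  have hη : StrictAntiOn (fun p : ℝ => (A + B * p) / Real.logb 2 (1 + K * p)) (Set.Ioc 0 P) := by
    apply strictAntiOn_of_deriv_neg (convex_Ioc 0 P)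
    · intro p hp
      exact (hfd p hp.1).continuousAt.continuousWithinAt
    · intro p hp
      rw [interior_Ioc] at hp
      rw [(hfd p hp.1).deriv]
      apply div_neg_of_neg_of_pos
      · have hnum_eq : B * Real.logb 2 (1 + K * p) -
            (A + B * p) * (K / ((1 + K * p) * Real.log 2)) = φ p := by
          rw [hφdef]
          have h1 := hpos hp.1.le
          field_simp
        rw [hnum_eq]
        exact hφneg p hp
      · exact pow_pos (hLpos hp.1) 2
  refine ⟨hη, ?_⟩
  intro p hp
  rcases eq_or_lt_of_le hp.2 with h | h
  · rw [h]
  · exact (hη hp ⟨hP, le_refl P⟩ h).le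
end

section
/- Let ι be a finite nonempty index set, c : ι → ℝ with cᵢ > 0 for all i, and fᵐᵃˣ > 0. Define f*ᵢ = fᵐᵃˣ·√cᵢ / (Σⱼ √cⱼ). Then f*ᵢ > 0 for all i, Σᵢ f*ᵢ = fᵐᵃˣ, Σᵢ cᵢ/f*ᵢ = (Σᵢ √cᵢ)²/fᵐᵃˣ, and for every f : ι → ℝ with fᵢ > 0 for all i and Σᵢ fᵢ ≤ fᵐᵃˣ one has Σᵢ cᵢ/f*ᵢ ≤ Σᵢ cᵢ/fᵢ; that is, f* is an optimal solution of the computation-resource allocation problem. -/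
/-- The allocation f*ᵢ = fᵐᵃˣ·√cᵢ/Σⱼ√cⱼ is feasible, saturates the capacity,
achieves value (Σᵢ √cᵢ)²/fᵐᵃˣ, and is optimal for the OPT-CRA problem. -/
theorem cra_optimal_allocation (ι : Type*) [Fintype ι] [Nonempty ι]
    (c : ι → ℝ) (hc : ∀ i, 0 < c i) (fmax : ℝ) (hfmax : 0 < fmax) :
    (∀ i, 0 < fmax * Real.sqrt (c i) / ∑ j, Real.sqrt (c j)) ∧
    (∑ i, fmax * Real.sqrt (c i) / ∑ j, Real.sqrt (c j)) = fmax ∧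
    (∑ i, c i / (fmax * Real.sqrt (c i) / ∑ j, Real.sqrt (c j))) =
      (∑ i, Real.sqrt (c i)) ^ 2 / fmax ∧
    ∀ f : ι → ℝ, (∀ i, 0 < f i) → (∑ i, f i) ≤ fmax →
      (∑ i, c i / (fmax * Real.sqrt (c i) / ∑ j, Real.sqrt (c j))) ≤ ∑ i, c i / f i := by
  have hs : ∀ i, 0 < Real.sqrt (c i) := fun i => Real.sqrt_pos.2 (hc i)
  have hS : 0 < ∑ j, Real.sqrt (c j) :=
    Finset.sum_pos (fun i _ => hs i) Finset.univ_nonempty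
  have hval : ∀ i, c i / (fmax * Real.sqrt (c i) / ∑ j, Real.sqrt (c j)) =
      Real.sqrt (c i) * (∑ j, Real.sqrt (c j)) / fmax := by
    intro i
    have hci : Real.sqrt (c i) * Real.sqrt (c i) = c i := Real.mul_self_sqrt (hc i).le
    rw [div_div_eq_mul_div, div_eq_div_iff (mul_pos hfmax (hs i)).ne' hfmax.ne']
    linear_combination (-((∑ j, Real.sqrt (c j)) * fmax)) * hci
  have hvalsum : (∑ i, c i / (fmax * Real.sqrt (c i) / ∑ j, Real.sqrt (c j))) =
      (∑ i, Real.sqrt (c i)) ^ 2 / fmax := by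
    rw [Finset.sum_congr rfl fun i _ => hval i, ← Finset.sum_div, ← Finset.sum_mul, sq]
  refine ⟨fun i => div_pos (mul_pos hfmax (hs i)) hS, ?_, hvalsum, ?_⟩
  · rw [← Finset.sum_div, ← Finset.mul_sum, mul_div_assoc, div_self hS.ne', mul_one]
  · intro f hf hsum
    rw [hvalsum]
    have h1 : (∑ i, Real.sqrt (c i)) ^ 2 / fmax ≤ (∑ i, Real.sqrt (c i)) ^ 2 / ∑ i, f i :=
      div_le_div_of_nonneg_left (by positivity) (Finset.sum_pos (fun i _ => hf i) Finset.univ_nonempty) hsum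
    refine h1.trans ?_
    have h2 := Finset.sq_sum_div_le_sum_sq_div Finset.univ (fun i => Real.sqrt (c i))
      (fun i _ => hf i)
    simpa [Real.sq_sqrt (hc _).le] using h2
end

section
/- Let U and S be finite types. Suppose that for each u ∈ U there is an injective ranking ρᵤ : S → ℕ (larger value means more preferred), and for each s ∈ S there is an injective ranking σₛ : U → ℕ. Call μ : U → Option S a matching if μ u = some s and μ u' = some s imply u = u'. Say a pair (u, s) blocks μ if μ u ≠ some s; and either μ u = none or μ u = some s' with ρᵤ(s) > ρᵤ(s'); and either no u' satisfies μ u' = some s, or there exists u' with μ u' = some s and σₛ(u) > σₛ(u'). Then there exists a matching μ admitting no blocking pair. -/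
set_option linter.unusedSectionVars false
set_option linter.unusedVariables false

open Finset
open scoped Classical

namespace SMatchAux

variable {U S : Type*} [Fintype U] [Fintype S]

/-- Best element of a finset under a ranking, as an `Option`. -/
noncomputable def best (f : S → ℕ) (t : Finset S) : Option S :=
  if h : t.Nonempty then some (Finset.exists_max_image t f h).choose else none

lemma best_mem {f : S → ℕ} {t : Finset S} {s : S} (h : best f t = some s) : s ∈ t := by
  unfold best at h
  split_ifs at h with ht
  obtain ⟨hm, _⟩ := (Finset.exists_max_image t f ht).choose_spec
  rw [← Option.some_inj.mp h]; exact hm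

lemma best_max {f : S → ℕ} {t : Finset S} {s : S} (h : best f t = some s)
    {s' : S} (hs' : s' ∈ t) : f s' ≤ f s := by
  unfold best at h
  split_ifs at h with ht
  obtain ⟨_, hmax⟩ := (Finset.exists_max_image t f ht).choose_spec
  rw [← Option.some_inj.mp h]; exact hmax s' hs'

lemma best_none {f : S → ℕ} {t : Finset S} (h : best f t = none) : t = ∅ := by
  unfold best at h
  split_ifs at h with ht
  exact Finset.not_nonempty_iff_eq_empty.mp ht

variable (ρ : U → S → ℕ) (σ : S → U → ℕ)

/-- Current proposal of user `u`, given rejection sets `R`. -/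
noncomputable def prop (R : U → Finset S) (u : U) : Option S :=
  best (ρ u) (Finset.univ \ R u)

/-- `u` is (tentatively) held by `s`. -/
def held (R : U → Finset S) (s : S) (u : U) : Prop :=
  prop ρ R u = some s ∧ ∀ u', prop ρ R u' = some s → σ s u' ≤ σ s u

/-- One round of deferred acceptance: every proposer not held gets rejected. -/
noncomputable def step (R : U → Finset S) (u : U) : Finset S :=
  (prop ρ R u).elim (R u) fun s => if held ρ σ R s u then R u else insert s (R u)

lemma prop_congr {R R' : U → Finset S} {u : U} (h : R u = R' u) :
    prop ρ R u = prop ρ R' u := by unfold prop; rw [h]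

lemma prop_notMem {R : U → Finset S} {u : U} {s : S} (h : prop ρ R u = some s) :
    s ∉ R u := by
  have := best_mem h
  simp only [Finset.mem_sdiff, Finset.mem_univ, true_and] at this
  exact this

lemma prop_max {R : U → Finset S} {u : U} {s : S} (h : prop ρ R u = some s)
    {s' : S} (hs' : s' ∉ R u) : ρ u s' ≤ ρ u s :=
  best_max h (by simp [Finset.mem_sdiff, hs'])

lemma prop_none {R : U → Finset S} {u : U} (h : prop ρ R u = none) (s : S) :
    s ∈ R u := by
  by_contra hs
  have hmem : s ∈ Finset.univ \ R u := by simp [hs]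
  rw [best_none h] at hmem
  simp at hmem

lemma step_of_none {R : U → Finset S} {u : U} (h : prop ρ R u = none) :
    step ρ σ R u = R u := by simp [step, h]

lemma step_of_held {R : U → Finset S} {u : U} {s : S} (h : held ρ σ R s u) :
    step ρ σ R u = R u := by simp [step, h.1, h]

lemma step_of_not_held {R : U → Finset S} {u : U} {s : S}
    (hp : prop ρ R u = some s) (h : ¬ held ρ σ R s u) :
    step ρ σ R u = insert s (R u) := by simp [step, hp, h]

lemma subset_step (R : U → Finset S) (u : U) : R u ⊆ step ρ σ R u := by
  rcases hp : prop ρ R u with _ | s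
  · rw [step_of_none ρ σ hp]
  · by_cases h : held ρ σ R s u
    · rw [step_of_held ρ σ h]
    · rw [step_of_not_held ρ σ hp h]; exact Finset.subset_insert _ _

/-- Terminal state: every proposer is held. -/
def terminal (R : U → Finset S) : Prop :=
  ∀ u s, prop ρ R u = some s → held ρ σ R s u

lemma measure_lt {R : U → Finset S} (h : ¬ terminal ρ σ R) :
    ∑ u, (R u).card < ∑ u, (step ρ σ R u).card := by
  unfold terminal at h
  push_neg at h
  obtain ⟨u, s, hp, hh⟩ := h
  refine Finset.sum_lt_sum (fun i _ => Finset.card_le_card (subset_step ρ σ R i))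
    ⟨u, Finset.mem_univ u, ?_⟩
  rw [step_of_not_held ρ σ hp hh,
    Finset.card_insert_of_notMem (prop_notMem ρ hp)]
  omega

/-- A good proposer for `s` persists through a step. -/
lemma persist {R : U → Finset S} {s : S} {c : ℕ}
    (h : ∃ u', prop ρ R u' = some s ∧ c < σ s u') :
    ∃ u', prop ρ (step ρ σ R) u' = some s ∧ c < σ s u' := by
  obtain ⟨u0, hu0, hc⟩ := h
  set t : Finset U := Finset.univ.filter (fun u' => prop ρ R u' = some s) with ht_def
  have hu0t : u0 ∈ t := by simp [ht_def, hu0]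
  obtain ⟨um, humt, hmax⟩ := Finset.exists_max_image t (σ s) ⟨u0, hu0t⟩
  have hpm : prop ρ R um = some s := by
    simpa [ht_def] using humt
  have hheld : held ρ σ R s um :=
    ⟨hpm, fun u' h' => hmax u' (by simp [ht_def, h'])⟩
  refine ⟨um, ?_, lt_of_lt_of_le hc (hmax u0 hu0t)⟩
  rw [prop_congr ρ (step_of_held ρ σ hheld)]
  exact hpm

/-- The key invariant: every rejected user has a strictly better rival proposing. -/
def Inv (R : U → Finset S) : Prop :=
  ∀ u s, s ∈ R u → ∃ u', prop ρ R u' = some s ∧ σ s u < σ s u'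

lemma inv_step {R : U → Finset S} (hInv : Inv ρ σ R) : Inv ρ σ (step ρ σ R) := by
  intro u s hs
  by_cases hmem : s ∈ R u
  · exact persist ρ σ (hInv u s hmem)
  · rcases hp : prop ρ R u with _ | s0
    · rw [step_of_none ρ σ hp] at hs; exact absurd hs hmem
    · by_cases hh : held ρ σ R s0 u
      · rw [step_of_held ρ σ hh] at hs; exact absurd hs hmem
      · rw [step_of_not_held ρ σ hp hh] at hs
        rcases Finset.mem_insert.mp hs with rfl | h2
        · refine persist ρ σ ?_
          by_contra hcon
          push_neg at hcon
          exact hh ⟨hp, hcon⟩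
        · exact absurd h2 hmem

/-- Iterating the deferred-acceptance step from the empty rejection sets. -/
noncomputable def Rn (n : ℕ) : U → Finset S :=
  (step ρ σ)^[n] (fun _ => (∅ : Finset S))

lemma Rn_succ (n : ℕ) : Rn ρ σ (n + 1) = step ρ σ (Rn ρ σ n) := by
  unfold Rn
  rw [Function.iterate_succ_apply']

lemma inv_Rn (n : ℕ) : Inv ρ σ (Rn ρ σ n) := by
  induction n with
  | zero => intro u s hs; simp [Rn] at hs
  | succ n ih => rw [Rn_succ]; exact inv_step ρ σ ih

lemma exists_terminal : ∃ n, terminal ρ σ (Rn ρ σ n) := by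
  by_contra h
  push_neg at h
  have key : ∀ n, n ≤ ∑ u, ((Rn ρ σ n) u).card := by
    intro n
    induction n with
    | zero => omega
    | succ n ih =>
      have hlt := measure_lt ρ σ (h n)
      rw [← Rn_succ] at hlt
      omega
  have hb : ∑ u, ((Rn ρ σ (Fintype.card U * Fintype.card S + 1)) u).card
      ≤ Fintype.card U * Fintype.card S := by
    calc ∑ u, ((Rn ρ σ (Fintype.card U * Fintype.card S + 1)) u).card
        ≤ ∑ _u : U, Fintype.card S :=
          Finset.sum_le_sum (fun i _ => Finset.card_le_card (Finset.subset_univ _))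
      _ = Fintype.card U * Fintype.card S := by
          simp [Finset.sum_const, Finset.card_univ, mul_comm]
  have := key (Fintype.card U * Fintype.card S + 1)
  omega

end SMatchAux

/-- Existence of a stable one-to-one matching for any finite two-sided market
with strict preferences (users × subchannels). -/
theorem exists_stable_one_to_one_matching (U S : Type*) [Fintype U] [Fintype S]
    (ρ : U → S → ℕ) (σ : S → U → ℕ)
    (hρ : ∀ u, Function.Injective (ρ u)) (hσ : ∀ s, Function.Injective (σ s)) :
    ∃ μ : U → Option S,
      (∀ u u' s, μ u = some s → μ u' = some s → u = u') ∧
      ¬ ∃ (u : U) (s : S),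
          μ u ≠ some s ∧
          (μ u = none ∨ ∃ s', μ u = some s' ∧ ρ u s' < ρ u s) ∧
          ((¬ ∃ u', μ u' = some s) ∨ ∃ u', μ u' = some s ∧ σ s u' < σ s u) := by
  classical
  obtain ⟨N, hT⟩ := SMatchAux.exists_terminal ρ σ
  set R := SMatchAux.Rn ρ σ N with hR
  set μ : U → Option S := fun u => SMatchAux.prop ρ R u with hμ
  have hmatch : ∀ u u' s, μ u = some s → μ u' = some s → u = u' := by
    intro u u' s h1 h2
    have hh1 := hT u s h1
    have hh2 := hT u' s h2
    exact hσ s (le_antisymm (hh2.2 u h1) (hh1.2 u' h2))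
  refine ⟨μ, hmatch, ?_⟩
  rintro ⟨u, s, hne, hpref, hside⟩
  have hsR : s ∈ R u := by
    rcases hpref with h0 | ⟨s', hs', hlt⟩
    · exact SMatchAux.prop_none ρ h0 s
    · by_contra hns
      exact absurd (SMatchAux.prop_max ρ hs' hns) (not_le.mpr hlt)
  obtain ⟨u₁, hu₁, hσlt⟩ := SMatchAux.inv_Rn ρ σ N u s hsR
  rcases hside with hno | ⟨u', hu', hlt'⟩
  · exact hno ⟨u₁, hu₁⟩
  · have heq : u' = u₁ := hmatch u' u₁ s hu' hu₁
    rw [heq] at hlt'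
    omega
end

section
/- Let N (users) and M (servers) be finite types and q : M → ℕ a quota function. Suppose that for each n ∈ N there is an injective ranking ρₙ : M → ℕ (larger value means more preferred), and for each m ∈ M there is an injective ranking σₘ : N → ℕ. Call μ : N → Option M a matching if for each m ∈ M the number of n with μ n = some m is at most q m. Say a pair (n, m) blocks μ if μ n ≠ some m; and either μ n = none or μ n = some m' with ρₙ(m) > ρₙ(m'); and either the number of users n' with μ n' = some m is strictly less than q m, or there exists n' with μ n' = some m and σₘ(n) > σₘ(n'). Then there exists a matching μ admitting no blocking pair. -/
open Finset

section DA

variable {N M : Type*} [Fintype N] [Fintype M] [DecidableEq N] [DecidableEq M]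

/-- Best element of a finset according to a ranking `f`, if nonempty. -/
noncomputable def bestOf (f : M → ℕ) (A : Finset M) : Option M :=
  if h : A.Nonempty then some (A.exists_max_image f h).choose else none

set_option linter.unusedSectionVars false

theorem bestOf_spec {f : M → ℕ} {A : Finset M} {m : M} (h : bestOf f A = some m) :
    m ∈ A ∧ ∀ m' ∈ A, f m' ≤ f m := by
  unfold bestOf at h
  split_ifs at h with hA
  obtain ⟨hmem, hmax⟩ := (A.exists_max_image f hA).choose_spec
  obtain rfl : _ = m := Option.some_injective _ h
  exact ⟨hmem, hmax⟩

theorem bestOf_isSome {f : M → ℕ} {A : Finset M} (h : A.Nonempty) :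
    ∃ m, bestOf f A = some m := by
  unfold bestOf
  rw [dif_pos h]
  exact ⟨_, rfl⟩

variable (q : M → ℕ) (ρ : N → M → ℕ) (σ : M → N → ℕ)

/-- Proposal of user `n` given rejection sets `R`. -/
noncomputable def daProp (R : N → Finset M) (n : N) : Option M :=
  bestOf (ρ n) ((R n)ᶜ)

/-- Set of users currently proposing to server `m`. -/
noncomputable def daP (R : N → Finset M) (m : M) : Finset N :=
  univ.filter fun n => daProp ρ R n = some m

/-- The key invariant: any server that rejected `n` has `q m` present proposers,
each strictly better than `n`. -/
def daInv (R : N → Finset M) : Prop :=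
  ∀ n m, m ∈ R n →
    ∃ S, S ⊆ daP ρ R m ∧ S.card = q m ∧ ∀ n' ∈ S, σ m n < σ m n'

theorem daProp_congr {R R' : N → Finset M} {n : N} (h : R' n = R n) :
    daProp ρ R' n = daProp ρ R n := by
  unfold daProp
  rw [h]

theorem da_good (hρ : ∀ n, Function.Injective (ρ n))
    (R : N → Finset M) (hInv : daInv q ρ σ R)
    (hfull : ∀ m, (daP ρ R m).card ≤ q m) :
    ∃ μ : N → Option M,
      (∀ m : M, (Finset.univ.filter fun n => μ n = some m).card ≤ q m) ∧
      ¬ ∃ (n : N) (m : M),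
          μ n ≠ some m ∧
          (μ n = none ∨ ∃ m', μ n = some m' ∧ ρ n m' < ρ n m) ∧
          ((Finset.univ.filter fun n' => μ n' = some m).card < q m ∨
            ∃ n', μ n' = some m ∧ σ m n' < σ m n) := by
  refine ⟨daProp ρ R, fun m => hfull m, ?_⟩
  rintro ⟨n, m, hne, hpref, hroom⟩
  by_cases hR : m ∈ R n
  · obtain ⟨S, hSsub, hScard, hbetter⟩ := hInv n m hR
    have hcardP : (daP ρ R m).card = q m :=
      le_antisymm (hfull m) (hScard ▸ Finset.card_le_card hSsub)
    have hSeq : S = daP ρ R m :=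
      Finset.eq_of_subset_of_card_le hSsub (by omega)
    rcases hroom with hlt | ⟨n', hn', hσn'⟩
    · exact absurd hcardP (by exact fun h => absurd hlt (by rw [show (Finset.univ.filter fun n' => daProp ρ R n' = some m) = daP ρ R m from rfl, h]; omega))
    · have hn'P : n' ∈ daP ρ R m := by
        simp only [daP, mem_filter, mem_univ, true_and]; exact hn'
      have := hbetter n' (hSeq ▸ hn'P)
      omega
  · -- m is available to n, so n's proposal is at least as good as m
    have hmem : m ∈ (R n)ᶜ := by simpa using hR
    obtain ⟨m'', hm''⟩ := bestOf_isSome (f := ρ n) ⟨m, hmem⟩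
    have hprop : daProp ρ R n = some m'' := hm''
    obtain ⟨_, hmax⟩ := bestOf_spec hm''
    have hle : ρ n m ≤ ρ n m'' := hmax m hmem
    rcases hpref with hnone | ⟨m', hm', hlt⟩
    · rw [hprop] at hnone; exact absurd hnone (by simp)
    · rw [hprop] at hm'
      cases hm'
      omega

theorem da_bad (hσ : ∀ m, Function.Injective (σ m))
    (R : N → Finset M) (hInv : daInv q ρ σ R)
    (m₀ : M) (hover : q m₀ < (daP ρ R m₀).card) :
    ∃ R' : N → Finset M, daInv q ρ σ R' ∧
      (∑ n, ((R' n)ᶜ : Finset M).card) < (∑ n, ((R n)ᶜ : Finset M).card) := by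
  -- pick the worst proposer n₀ to m₀
  have hPne : (daP ρ R m₀).Nonempty := Finset.card_pos.mp (by omega)
  obtain ⟨n₀, hn₀P, hn₀min⟩ := (daP ρ R m₀).exists_min_image (σ m₀) hPne
  have hprop₀ : daProp ρ R n₀ = some m₀ := by
    simpa [daP] using hn₀P
  have hm₀avail : m₀ ∈ (R n₀)ᶜ := (bestOf_spec hprop₀).1
  have hm₀notR : m₀ ∉ R n₀ := by simpa using hm₀avail
  set R' : N → Finset M := fun n => if n = n₀ then insert m₀ (R n) else R n with hR'
  have hprop_eq : ∀ n, n ≠ n₀ → daProp ρ R' n = daProp ρ R n := by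
    intro n hn
    exact daProp_congr ρ (by simp [hR', hn])
  have hprop₀' : ∀ m, daProp ρ R' n₀ = some m → m ≠ m₀ := by
    intro m hm hmm
    subst hmm
    have := (bestOf_spec hm).1
    simp [hR'] at this
  -- proposers to m₀ under R' are exactly the old ones minus n₀
  have hPm₀ : daP ρ R' m₀ = (daP ρ R m₀).erase n₀ := by
    ext n
    simp only [daP, mem_filter, mem_univ, true_and, mem_erase]
    constructor
    · intro h
      have hn : n ≠ n₀ := by
        intro hnn; subst hnn; exact hprop₀' m₀ h rfl
      exact ⟨hn, by rwa [hprop_eq n hn] at h⟩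
    · rintro ⟨hn, h⟩
      rwa [hprop_eq n hn]
  -- proposers to other servers only grow
  have hPother : ∀ m, m ≠ m₀ → daP ρ R m ⊆ daP ρ R' m := by
    intro m hm n hn
    simp only [daP, mem_filter, mem_univ, true_and] at hn ⊢
    have hnn₀ : n ≠ n₀ := by
      intro hnn; subst hnn
      rw [hprop₀] at hn
      exact hm (Option.some_injective _ hn).symm
    rwa [hprop_eq n hnn₀]
  -- a good replacement set inside the new proposers to m₀
  have hcard' : q m₀ ≤ ((daP ρ R m₀).erase n₀).card := by
    rw [Finset.card_erase_of_mem hn₀P]; omega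
  obtain ⟨T, hTsub, hTcard⟩ := Finset.exists_subset_card_eq hcard'
  have hTgood : ∀ n' ∈ T, σ m₀ n₀ < σ m₀ n' := by
    intro n' hn'
    have hmem := hTsub hn'
    rw [Finset.mem_erase] at hmem
    have hle := hn₀min n' hmem.2
    have : σ m₀ n₀ ≠ σ m₀ n' := fun h => hmem.1 ((hσ m₀ h).symm)
    omega
  refine ⟨R', ?_, ?_⟩
  · -- invariant preserved
    intro n m hmR'
    by_cases hm : m = m₀
    · subst hm
      by_cases hn : n = n₀
      · subst hn
        exact ⟨T, by rwa [hPm₀], hTcard, hTgood⟩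
      · -- old rejection of n by m₀
        have hmR : m ∈ R n := by simpa [hR', hn] using hmR'
        obtain ⟨S, hSsub, hScard, hSgood⟩ := hInv n m hmR
        by_cases hn₀S : n₀ ∈ S
        · refine ⟨T, by rwa [hPm₀], hTcard, fun n' hn' => ?_⟩
          have h1 := hSgood n₀ hn₀S
          have h2 := hTgood n' hn'
          omega
        · refine ⟨S, ?_, hScard, hSgood⟩
          rw [hPm₀]
          intro s hs
          exact Finset.mem_erase.mpr ⟨fun h => hn₀S (h ▸ hs), hSsub hs⟩
    · -- server other than m₀
      have hmR : m ∈ R n := by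
        by_cases hn : n = n₀
        · subst hn
          simp only [hR', if_pos rfl, Finset.mem_insert] at hmR'
          rcases hmR' with h | h
          · exact absurd h hm
          · exact h
        · simpa [hR', hn] using hmR'
      obtain ⟨S, hSsub, hScard, hSgood⟩ := hInv n m hmR
      exact ⟨S, hSsub.trans (hPother m hm), hScard, hSgood⟩
  · -- measure decreases
    refine Finset.sum_lt_sum (fun n _ => ?_) ⟨n₀, Finset.mem_univ n₀, ?_⟩
    · by_cases hn : n = n₀
      · subst hn
        simp only [hR', if_pos rfl]
        exact Finset.card_le_card (Finset.compl_subset_compl.mpr (Finset.subset_insert _ _))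
      · simp [hR', hn]
    · simp only [hR', if_pos rfl, Finset.compl_insert]
      have hpos : 0 < ((R n₀)ᶜ).card := Finset.card_pos.mpr ⟨m₀, hm₀avail⟩
      rw [Finset.card_erase_of_mem hm₀avail]
      omega

theorem da_main (hρ : ∀ n, Function.Injective (ρ n)) (hσ : ∀ m, Function.Injective (σ m)) :
    ∀ (k : ℕ) (R : N → Finset M), (∑ n, ((R n)ᶜ : Finset M).card) ≤ k → daInv q ρ σ R →
    ∃ μ : N → Option M,
      (∀ m : M, (Finset.univ.filter fun n => μ n = some m).card ≤ q m) ∧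
      ¬ ∃ (n : N) (m : M),
          μ n ≠ some m ∧
          (μ n = none ∨ ∃ m', μ n = some m' ∧ ρ n m' < ρ n m) ∧
          ((Finset.univ.filter fun n' => μ n' = some m).card < q m ∨
            ∃ n', μ n' = some m ∧ σ m n' < σ m n) := by
  intro k
  induction k with
  | zero =>
    intro R hmeas hInv
    by_cases hfull : ∀ m, (daP ρ R m).card ≤ q m
    · exact da_good q ρ σ hρ R hInv hfull
    · push_neg at hfull
      obtain ⟨m₀, hm₀⟩ := hfull
      obtain ⟨R', _, hlt⟩ := da_bad q ρ σ hσ R hInv m₀ hm₀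
      omega
  | succ k ih =>
    intro R hmeas hInv
    by_cases hfull : ∀ m, (daP ρ R m).card ≤ q m
    · exact da_good q ρ σ hρ R hInv hfull
    · push_neg at hfull
      obtain ⟨m₀, hm₀⟩ := hfull
      obtain ⟨R', hInv', hlt⟩ := da_bad q ρ σ hσ R hInv m₀ hm₀
      exact ih R' (by omega) hInv'

end DA

/-- Existence of a stable many-to-one matching with quotas for any finite
two-sided market with strict preferences (users × MEC servers). -/
theorem exists_stable_many_to_one_matching (N M : Type*) [Fintype N] [Fintype M]
    [DecidableEq N] [DecidableEq M] (q : M → ℕ)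
    (ρ : N → M → ℕ) (σ : M → N → ℕ)
    (hρ : ∀ n, Function.Injective (ρ n)) (hσ : ∀ m, Function.Injective (σ m)) :
    ∃ μ : N → Option M,
      (∀ m : M, (Finset.univ.filter fun n => μ n = some m).card ≤ q m) ∧
      ¬ ∃ (n : N) (m : M),
          μ n ≠ some m ∧
          (μ n = none ∨ ∃ m', μ n = some m' ∧ ρ n m' < ρ n m) ∧
          ((Finset.univ.filter fun n' => μ n' = some m).card < q m ∨
            ∃ n', μ n' = some m ∧ σ m n' < σ m n) := by
  exact da_main q ρ σ hρ hσ (∑ n : N, ((∅ : Finset M)ᶜ).card) (fun _ => ∅) le_rfl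
    (fun n m h => absurd h (Finset.notMem_empty m))
end
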